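/- The Bucklin voting method violates positive involvement: there exists a profile P, a candidate x ∈ Bucklin(P), and a profile P' obtained from P by adding one new voter whose ballot ranks x in first place, such that x ∉ Bucklin(P'). (A witness: P is the 4-voter profile on candidates {a,b,c,d,e} with ballots abced, aecbd, becda, cdabe, in which Bucklin(P) = {c}; adding a voter with ballot cebda yields Bucklin(P') = {e}.) -/

import Mathlib

open scoped Classical

/-- `r` is a strict linear order on the finite set `X`, relating only members of `X`. -/
def IsLinOn (X : Finset ℕ) (r : ℕ → ℕ → Prop) : Prop :=
  (∀ a b, r a b → a ∈ X ∧ b ∈ X) ∧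
  (∀ a, ¬ r a a) ∧
  (∀ a b c, r a b → r b c → r a c) ∧
  (∀ a ∈ X, ∀ b ∈ X, a ≠ b → r a b ∨ r b a)

/-- A profile assigns to each voter in a nonempty finite set of voters a strict linear
order (ballot) on a nonempty finite set of candidates.  Voters and candidates are both
drawn from the infinite set `ℕ`. -/
structure Profile where
  voters : Finset ℕ
  cands : Finset ℕ
  voters_nonempty : voters.Nonempty
  cands_nonempty : cands.Nonempty
  ballot : ℕ → ℕ → ℕ → Prop
  ballot_lin : ∀ i ∈ voters, IsLinOn cands (ballot i)

/-- `F` is a voting method: it assigns to each profile a nonempty set of winners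
among the candidates of the profile. -/
def VotingMethod (F : Profile → Finset ℕ) : Prop :=
  ∀ P : Profile, (F P).Nonempty ∧ F P ⊆ P.cands

/-- The ballot `r` ranks `x` in first place among the candidates in `X`. -/
def RanksFirst (X : Finset ℕ) (r : ℕ → ℕ → Prop) (x : ℕ) : Prop :=
  x ∈ X ∧ ∀ y ∈ X, y ≠ x → r x y

/-- `P'` is obtained from `P` by adding one new voter `j` whose ballot ranks `x` in
first place. -/
def AddVoter (P P' : Profile) (j x : ℕ) : Prop :=
  P'.cands = P.cands ∧ j ∉ P.voters ∧ P'.voters = insert j P.voters ∧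
  (∀ i ∈ P.voters, ∀ a b, (P'.ballot i a b ↔ P.ballot i a b)) ∧
  RanksFirst P.cands (P'.ballot j) x

/-- `F` satisfies positive involvement (PI). -/
def SatisfiesPI (F : Profile → Finset ℕ) : Prop :=
  ∀ (P P' : Profile) (j x : ℕ), x ∈ F P → AddVoter P P' j x → x ∈ F P'

/-- The rank of `x` in the ballot `r` on the candidate set `X`:
one plus the number of candidates ranked above `x`. -/
noncomputable def rankOf (X : Finset ℕ) (r : ℕ → ℕ → Prop) (x : ℕ) : ℕ :=
  (X.filter (fun b => r b x)).card + 1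

/-- The number of voters of `P` who rank `x` in `n`-th place or higher. -/
noncomputable def countRank (P : Profile) (n : ℕ) (x : ℕ) : ℕ :=
  (P.voters.filter (fun i => rankOf P.cands (P.ballot i) x ≤ n)).card

/-- `x` is an `n`-th level majority winner in `P`. -/
noncomputable def nthMaj (P : Profile) (n : ℕ) (x : ℕ) : Prop :=
  2 * countRank P n x > P.voters.card

/-- The smallest positive `k` for which there is a `k`-th level majority winner. -/
noncomputable def bucklinLevel (P : Profile) : ℕ :=
  sInf {n : ℕ | 0 < n ∧ ∃ x ∈ P.cands, nthMaj P n x}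

/-- The Bucklin winners: where `k` is the smallest level at which some candidate is a
`k`-th level majority winner, the `k`-th level majority winners for whom the number of
voters ranking them in `k`-th place or higher is maximal. -/
noncomputable def Bucklin (P : Profile) : Finset ℕ :=
  P.cands.filter (fun x => nthMaj P (bucklinLevel P) x ∧
    ∀ y ∈ P.cands, nthMaj P (bucklinLevel P) y →
      countRank P (bucklinLevel P) y ≤ countRank P (bucklinLevel P) x)


-- ===== auxiliary material =====

def X5 : Finset ℕ := {0,1,2,3,4}

def blt (l : List ℕ) (a b : ℕ) : Prop := a ∈ l ∧ b ∈ l ∧ l.idxOf a < l.idxOf b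

instance (l : List ℕ) (a b : ℕ) : Decidable (blt l a b) :=
  inferInstanceAs (Decidable (_ ∧ _ ∧ _))

lemma blt_lin (l : List ℕ) (hm : l.toFinset = X5) : IsLinOn X5 (blt l) := by
  refine ⟨?_, ?_, ?_, ?_⟩
  · rintro a b ⟨ha, hb, -⟩
    rw [← hm]
    exact ⟨List.mem_toFinset.2 ha, List.mem_toFinset.2 hb⟩
  · rintro a ⟨-, -, h⟩
    exact lt_irrefl _ h
  · rintro a b c ⟨ha, hb, h1⟩ ⟨-, hc, h2⟩
    exact ⟨ha, hc, h1.trans h2⟩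
  · intro a ha b hb hne
    have ha' : a ∈ l := by rw [← List.mem_toFinset, hm]; exact ha
    have hb' : b ∈ l := by rw [← List.mem_toFinset, hm]; exact hb
    rcases lt_trichotomy (l.idxOf a) (l.idxOf b) with h | h | h
    · exact Or.inl ⟨ha', hb', h⟩
    · exact absurd ((List.idxOf_inj ha').1 h) hne
    · exact Or.inr ⟨hb', ha', h⟩

def lst : ℕ → List ℕ
  | 0 => [0,1,2,4,3]
  | 1 => [0,4,2,1,3]
  | 2 => [1,4,2,3,0]
  | 3 => [2,3,0,1,4]
  | _ => [2,4,1,3,0]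

def Pw : Profile where
  voters := {0,1,2,3}
  cands := X5
  voters_nonempty := ⟨0, by decide⟩
  cands_nonempty := ⟨0, by decide⟩
  ballot := fun i => blt (lst i)
  ballot_lin := by intro i hi; fin_cases hi <;> exact blt_lin _ (by decide)

def Pw' : Profile where
  voters := {0,1,2,3,4}
  cands := X5
  voters_nonempty := ⟨0, by decide⟩
  cands_nonempty := ⟨0, by decide⟩
  ballot := fun i => blt (lst i)
  ballot_lin := by intro i hi; fin_cases hi <;> exact blt_lin _ (by decide)

/-- computable version of the relevant counts -/
def fcnt (V : Finset ℕ) (n x : ℕ) : ℕ :=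
  (V.filter (fun i => (X5.filter (fun b => blt (lst i) b x)).card + 1 ≤ n)).card

lemma rank_eq (i x : ℕ) :
    rankOf X5 (blt (lst i)) x = (X5.filter (fun b => blt (lst i) b x)).card + 1 := by
  rw [rankOf, Finset.filter_congr_decidable]

lemma countPw (n x : ℕ) : countRank Pw n x = fcnt {0,1,2,3} n x := by
  rw [countRank]
  have h3 : Pw.voters = ({0,1,2,3} : Finset ℕ) := rfl
  rw [h3]
  have : ∀ i : ℕ, (rankOf Pw.cands (Pw.ballot i) x ≤ n) =
      ((X5.filter (fun b => blt (lst i) b x)).card + 1 ≤ n) := by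
    intro i; rw [show rankOf Pw.cands (Pw.ballot i) x = rankOf X5 (blt (lst i)) x from rfl,
      rank_eq]
  simp only [this]
  rw [Finset.filter_congr_decidable]
  rfl

lemma countPw' (n x : ℕ) : countRank Pw' n x = fcnt {0,1,2,3,4} n x := by
  rw [countRank]
  have h3 : Pw'.voters = ({0,1,2,3,4} : Finset ℕ) := rfl
  rw [h3]
  have : ∀ i : ℕ, (rankOf Pw'.cands (Pw'.ballot i) x ≤ n) =
      ((X5.filter (fun b => blt (lst i) b x)).card + 1 ≤ n) := by
    intro i; rw [show rankOf Pw'.cands (Pw'.ballot i) x = rankOf X5 (blt (lst i)) x from rfl,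
      rank_eq]
  simp only [this]
  rw [Finset.filter_congr_decidable]
  rfl

lemma nthMajPw (n x : ℕ) : nthMaj Pw n x ↔ 2 * fcnt {0,1,2,3} n x > 4 := by
  unfold nthMaj
  rw [countPw, show Pw.voters.card = 4 from rfl]

lemma nthMajPw' (n x : ℕ) : nthMaj Pw' n x ↔ 2 * fcnt {0,1,2,3,4} n x > 5 := by
  unfold nthMaj
  rw [countPw', show Pw'.voters.card = 5 from rfl]

lemma levelPw : bucklinLevel Pw = 3 := by
  have hS3 : 3 ∈ {n : ℕ | 0 < n ∧ ∃ x ∈ Pw.cands, nthMaj Pw n x} :=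
    ⟨by norm_num, 2, by decide, (nthMajPw 3 2).2 (by decide)⟩
  refine le_antisymm (Nat.sInf_le hS3) (le_csInf ⟨3, hS3⟩ ?_)
  rintro n ⟨hpos, x, hx, hmaj⟩
  by_contra hlt
  push_neg at hlt
  rw [nthMajPw] at hmaj
  have hx' : x ∈ X5 := hx
  interval_cases n
  · revert hmaj
    revert hx'
    revert x
    decide
  · revert hmaj
    revert hx'
    revert x
    decide

lemma levelPw' : bucklinLevel Pw' = 2 := by
  have hS2 : 2 ∈ {n : ℕ | 0 < n ∧ ∃ x ∈ Pw'.cands, nthMaj Pw' n x} :=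
    ⟨by norm_num, 4, by decide, (nthMajPw' 2 4).2 (by decide)⟩
  refine le_antisymm (Nat.sInf_le hS2) (le_csInf ⟨2, hS2⟩ ?_)
  rintro n ⟨hpos, x, hx, hmaj⟩
  by_contra hlt
  push_neg at hlt
  rw [nthMajPw'] at hmaj
  have hx' : x ∈ X5 := hx
  interval_cases n
  revert hmaj
  revert hx'
  revert x
  decide

theorem bucklin_violates_PI :
    ∃ (P P' : Profile) (j x : ℕ),
      x ∈ Bucklin P ∧ AddVoter P P' j x ∧ x ∉ Bucklin P' := by
  refine ⟨Pw, Pw', 4, 2, ?_, ?_, ?_⟩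
  · rw [Bucklin, Finset.mem_filter]
    refine ⟨by decide, ?_, ?_⟩
    · rw [levelPw]
      exact (nthMajPw 3 2).2 (by decide)
    · intro y hy hmaj
      rw [levelPw] at hmaj ⊢
      rw [countPw, countPw, nthMajPw] at *
      have key : ∀ y ∈ X5, 2 * fcnt {0,1,2,3} 3 y > 4 →
          fcnt {0,1,2,3} 3 y ≤ fcnt {0,1,2,3} 3 2 := by decide
      exact key y hy hmaj
  · refine ⟨rfl, by decide, by decide, fun i _ a b => Iff.rfl, ?_⟩
    have key : ∀ y ∈ X5, y ≠ 2 → blt (lst 4) 2 y := by decide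
    exact ⟨by decide, key⟩
  · rw [Bucklin, Finset.mem_filter]
    rintro ⟨-, hmaj, -⟩
    rw [levelPw', nthMajPw'] at hmaj
    exact (by decide : ¬ (2 * fcnt {0,1,2,3,4} 2 2 > 5)) hmaj
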